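/- For every positive integer n and real σ with 0 < σ < 1, ∫₁^∞ |f_n(x)|·x^(−σ−1) dx ≤ (η(σ)/σ)·∑_{k=1}^n |μ(k)|/k^σ, where f_n(x) = ∑_{k=1}^n μ(k)·ν(x/k) and η(σ) = ∑_{k=1}^∞ ((2k−1)^(−σ) − (2k)^(−σ)). -/

import Mathlib

open MeasureTheory

noncomputable def nu (x : ℝ) : ℝ := 2 * Int.fract (x / 2) - Int.fract x

noncomputable def fn (n : ℕ) (x : ℝ) : ℝ :=
  ∑ k ∈ Finset.Icc 1 n, (ArithmeticFunction.moebius k : ℝ) * nu (x / k)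

noncomputable def etaR (σ : ℝ) : ℝ :=
  ∑' k : ℕ, ((2 * ((k : ℝ) + 1) - 1) ^ (-σ) - (2 * ((k : ℝ) + 1)) ^ (-σ))

noncomputable def SS (k : ℕ) : Set ℝ := Set.Ico (2*k+1 : ℝ) (2*k+2)

lemma floor_half (x : ℝ) : ⌊x / 2⌋ = ⌊x⌋ / 2 := by
  have h0 : 2 * (⌊x⌋ / 2) ≤ ⌊x⌋ := by omega
  have h2 : ⌊x⌋ < 2 * (⌊x⌋ / 2) + 2 := by omega
  have h0' : ((2 * (⌊x⌋ / 2) : ℤ) : ℝ) ≤ ((⌊x⌋ : ℤ) : ℝ) := by exact_mod_cast h0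
  have h2' : ((⌊x⌋ + 1 : ℤ) : ℝ) ≤ ((2 * (⌊x⌋ / 2) + 2 : ℤ) : ℝ) := by exact_mod_cast h2
  have hl := Int.floor_le x
  have hu := Int.lt_floor_add_one x
  rw [Int.floor_eq_iff]
  push_cast at h0' h2' ⊢
  constructor <;> linarith
lemma nu_eq (x : ℝ) : nu x = ((⌊x⌋ % 2 : ℤ) : ℝ) := by
  unfold nu
  rw [Int.fract, Int.fract, floor_half, Int.emod_def]
  push_cast
  ring

lemma nu_nonneg (x : ℝ) : 0 ≤ nu x := by
  rw [nu_eq]; exact_mod_cast Int.emod_nonneg _ (by norm_num)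

lemma nu_le_one (x : ℝ) : nu x ≤ 1 := by
  rw [nu_eq]
  have : ⌊x⌋ % 2 ≤ 1 := by omega
  exact_mod_cast this

lemma measurable_nu : Measurable nu := by
  unfold nu
  exact ((measurable_fract.comp (measurable_id.div_const 2)).const_mul 2).sub measurable_fract

lemma floor_SS {k : ℕ} {x : ℝ} (hx : x ∈ SS k) : ⌊x⌋ = 2*k+1 := by
  rw [Int.floor_eq_iff]
  obtain ⟨h1, h2⟩ := hx
  push_cast
  constructor <;> linarith

lemma nu_eq_indicator {x : ℝ} (hx : 0 < x) :
    nu x = Set.indicator (⋃ k, SS k) (fun _ => (1:ℝ)) x := by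
  by_cases h : x ∈ ⋃ k, SS k
  · rw [Set.indicator_of_mem h]
    obtain ⟨_, ⟨k, rfl⟩, hk⟩ := h
    rw [nu_eq, floor_SS hk]
    have : (2*(k:ℤ)+1) % 2 = 1 := by omega
    rw [this]; norm_num
  · rw [Set.indicator_of_notMem h, nu_eq]
    have hf : 0 ≤ ⌊x⌋ := Int.floor_nonneg.mpr hx.le
    have : ⌊x⌋ % 2 = 0 := by
      by_contra hodd
      have h1 : ⌊x⌋ % 2 = 1 := by omega
      set m : ℤ := ⌊x⌋ / 2 with hm
      have hm0 : 0 ≤ m := by omega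
      have hfl : ⌊x⌋ = 2 * m + 1 := by omega
      apply h
      refine Set.mem_iUnion.mpr ⟨m.toNat, ?_⟩
      have hmn : ((m.toNat : ℕ) : ℝ) = (m : ℝ) := by exact_mod_cast Int.toNat_of_nonneg hm0
      have hle := Int.floor_le x
      have hlt := Int.lt_floor_add_one x
      rw [hfl] at hle hlt
      push_cast at hle hlt
      constructor <;> rw [hmn] <;> linarith
    rw [this]; norm_num


lemma SS_meas (k : ℕ) : MeasurableSet (SS k) := measurableSet_Ico

lemma SS_disj : Pairwise (Function.onFun Disjoint SS) := by
  intro i j hij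
  rw [Function.onFun, Set.disjoint_left]
  intro x hxi hxj
  have h1 := floor_SS hxi
  have h2 := floor_SS hxj
  rw [h1] at h2
  exact hij (by exact_mod_cast by omega)

lemma SS_sub (k : ℕ) : SS k ⊆ Set.Ici (1:ℝ) := by
  intro x hx
  simp only [Set.mem_Ici]
  have h1 : (0:ℝ) ≤ 2*k := by positivity
  linarith [hx.1]

lemma rpow_integrableOn_Ici {σ : ℝ} (hσ : 0 < σ) :
    IntegrableOn (fun x : ℝ => x ^ (-σ-1)) (Set.Ici 1) := by
  rw [integrableOn_Ici_iff_integrableOn_Ioi]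
  exact integrableOn_Ioi_rpow_of_lt (by linarith) one_pos

lemma J_eq {σ : ℝ} (hσ : 0 < σ) :
    ∫ x in Set.Ioi (0:ℝ), nu x * x ^ (-σ-1) = etaR σ / σ := by
  have hU : MeasurableSet (⋃ k, SS k) := MeasurableSet.iUnion SS_meas
  have hUsub : (⋃ k, SS k) ⊆ Set.Ioi (0:ℝ) := by
    refine Set.iUnion_subset fun k => (SS_sub k).trans ?_
    intro x hx; exact lt_of_lt_of_le one_pos (Set.mem_Ici.mp hx)
  have hint : IntegrableOn (fun x : ℝ => x ^ (-σ-1)) (⋃ k, SS k) :=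
    (rpow_integrableOn_Ici hσ).mono_set (Set.iUnion_subset SS_sub)
  have step1 : ∫ x in Set.Ioi (0:ℝ), nu x * x ^ (-σ-1)
      = ∫ x in Set.Ioi (0:ℝ), Set.indicator (⋃ k, SS k) (fun t => t ^ (-σ-1)) x := by
    refine setIntegral_congr_fun measurableSet_Ioi fun x hx => ?_
    rw [nu_eq_indicator hx]
    by_cases h : x ∈ ⋃ k, SS k
    · rw [Set.indicator_of_mem h, Set.indicator_of_mem h, one_mul]
    · rw [Set.indicator_of_notMem h, Set.indicator_of_notMem h, zero_mul]
  have step2 : ∫ x in Set.Ioi (0:ℝ), Set.indicator (⋃ k, SS k) (fun t => t ^ (-σ-1)) x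
      = ∫ x in (⋃ k, SS k), (fun t : ℝ => t ^ (-σ-1)) x := by
    rw [integral_indicator hU, Measure.restrict_restrict hU,
      Set.inter_eq_left.mpr hUsub]
  have step3 : ∫ x in (⋃ k, SS k), (fun t : ℝ => t ^ (-σ-1)) x
      = ∑' k : ℕ, ∫ x in SS k, x ^ (-σ-1) :=
    integral_iUnion SS_meas SS_disj hint
  have step4 : ∀ k : ℕ, ∫ x in SS k, x ^ (-σ-1)
      = ((2*(k:ℝ)+1) ^ (-σ) - (2*(k:ℝ)+2) ^ (-σ)) / σ := by
    intro k
    have hle : (2*(k:ℝ)+1) ≤ 2*(k:ℝ)+2 := by linarith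
    have h0 : (0:ℝ) ∉ Set.uIcc (2*(k:ℝ)+1) (2*(k:ℝ)+2) := by
      rw [Set.uIcc_of_le hle]
      intro h
      have h1 : (0:ℝ) < 2*(k:ℝ)+1 := by positivity
      linarith [h.1]
    have : ∫ x in SS k, x ^ (-σ-1)
        = ∫ x in (2*(k:ℝ)+1)..(2*(k:ℝ)+2), x ^ (-σ-1) := by
      rw [SS, MeasureTheory.integral_Ico_eq_integral_Ioo,
        ← MeasureTheory.integral_Ioc_eq_integral_Ioo,
        ← intervalIntegral.integral_of_le hle]
    have hne : -σ-1 ≠ -1 := by intro h; apply hσ.ne'; linarith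
    rw [this, integral_rpow (Or.inr ⟨hne, h0⟩)]
    rw [show -σ-1+1 = -σ by ring]
    rw [div_eq_div_iff (by intro h; apply hσ.ne'; linarith) hσ.ne']
    ring
  rw [step1, step2, step3]
  rw [tsum_congr step4]
  rw [tsum_div_const]
  unfold etaR
  congr 1
  refine tsum_congr fun k => ?_
  ring_nf

lemma intgOn_Ioi0 {σ : ℝ} (hσ : 0 < σ) {c : ℝ} (hc : 1 ≤ c) :
    IntegrableOn (fun x : ℝ => nu (x / c) * x ^ (-σ-1)) (Set.Ioi 0) := by
  have hc0 : (0:ℝ) < c := lt_of_lt_of_le one_pos hc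
  have hrp : Measurable (fun x : ℝ => x ^ (-σ-1)) := by measurability
  have hmeas : Measurable (fun x : ℝ => nu (x / c) * x ^ (-σ-1)) :=
    (measurable_nu.comp (measurable_id.div_const c)).mul hrp
  have hsplit : Set.Ioi (0:ℝ) = Set.Ioo 0 1 ∪ Set.Ici 1 := by
    rw [Set.Ioo_union_Ici_eq_Ioi one_pos]
  rw [hsplit]
  apply IntegrableOn.union
  · apply (integrableOn_zero (s := Set.Ioo (0:ℝ) 1)).congr_fun _ measurableSet_Ioo
    intro x hx
    have h1 : 0 < x / c := div_pos hx.1 hc0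
    have h2 : x / c < 1 := by
      rw [div_lt_one hc0]; exact lt_of_lt_of_le hx.2 hc
    have : ⌊x / c⌋ = 0 := by
      rw [Int.floor_eq_iff] <;> constructor <;> push_cast <;> linarith
    simp [nu_eq, this]
  · refine Integrable.mono (rpow_integrableOn_Ici hσ)
      hmeas.aestronglyMeasurable.restrict (Filter.Eventually.of_forall fun x => ?_)
    rw [norm_mul]
    have h1 : |nu (x / c)| ≤ 1 := abs_le.mpr ⟨by linarith [nu_nonneg (x/c)], nu_le_one _⟩
    calc ‖nu (x / c)‖ * ‖x ^ (-σ-1)‖ ≤ 1 * ‖x ^ (-σ-1)‖ :=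
          mul_le_mul_of_nonneg_right h1 (norm_nonneg _)
      _ = ‖x ^ (-σ-1)‖ := one_mul _

lemma I_eq {σ : ℝ} (hσ : 0 < σ) {c : ℝ} (hc : 0 < c) :
    ∫ x in Set.Ioi (0:ℝ), nu (x / c) * x ^ (-σ-1) = c ^ (-σ) * (etaR σ / σ) := by
  have h := integral_comp_mul_left_Ioi (fun x => nu (x / c) * x ^ (-σ-1)) 0 hc
  rw [mul_zero] at h
  have h2 : ∫ x in Set.Ioi (0:ℝ), nu ((c * x) / c) * (c * x) ^ (-σ-1)
      = ∫ x in Set.Ioi (0:ℝ), c ^ (-σ-1) * (nu x * x ^ (-σ-1)) := by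
    refine setIntegral_congr_fun measurableSet_Ioi fun x hx => ?_
    rw [mul_div_cancel_left₀ _ hc.ne', Real.mul_rpow hc.le (le_of_lt hx)]
    ring
  rw [h2, MeasureTheory.integral_const_mul, J_eq hσ] at h
  have := congrArg (fun t : ℝ => c * t) h
  simp only [smul_eq_mul] at this
  rw [← mul_assoc (c) (c⁻¹), mul_inv_cancel₀ hc.ne', one_mul] at this
  rw [← this, ← mul_assoc]
  congr 1
  rw [show c * c ^ (-σ-1) = c ^ (1:ℝ) * c ^ (-σ-1) by rw [Real.rpow_one],
    ← Real.rpow_add hc]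
  congr 1; ring


theorem stmt_17 : ∀ n : ℕ, 0 < n → ∀ σ : ℝ, 0 < σ → σ < 1 →
    ∫ x in Set.Ioi (1 : ℝ), |fn n x| * x ^ (-σ - 1) ≤
      (etaR σ / σ) * ∑ k ∈ Finset.Icc 1 n, |(ArithmeticFunction.moebius k : ℝ)| / (k : ℝ) ^ σ := by
  intro n hn σ hσ hσ1
  have hk1 : ∀ k ∈ Finset.Icc 1 n, (1:ℝ) ≤ (k:ℝ) := by
    intro k hk
    have := (Finset.mem_Icc.mp hk).1
    exact_mod_cast this
  -- integrability of each term on Ioi 0 and Ioi 1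
  have hIk : ∀ k ∈ Finset.Icc 1 n,
      IntegrableOn (fun x : ℝ => nu (x / k) * x ^ (-σ-1)) (Set.Ioi 0) :=
    fun k hk => intgOn_Ioi0 hσ (hk1 k hk)
  have hIk1 : ∀ k ∈ Finset.Icc 1 n,
      IntegrableOn (fun x : ℝ => nu (x / k) * x ^ (-σ-1)) (Set.Ioi 1) :=
    fun k hk => (hIk k hk).mono_set (Set.Ioi_subset_Ioi zero_le_one)
  set G : ℝ → ℝ := fun x =>
    ∑ k ∈ Finset.Icc 1 n, |(ArithmeticFunction.moebius k : ℝ)| * (nu (x / k) * x ^ (-σ-1)) with hG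
  have hGint : IntegrableOn G (Set.Ioi 1) := by
    apply MeasureTheory.integrable_finset_sum
    intro k hk
    exact (hIk1 k hk).const_mul _
  have step1 : ∫ x in Set.Ioi (1:ℝ), |fn n x| * x ^ (-σ-1) ≤ ∫ x in Set.Ioi (1:ℝ), G x := by
    apply integral_mono_of_nonneg
    · filter_upwards [ae_restrict_mem measurableSet_Ioi] with x hx
      have hx0 : (0:ℝ) < x := lt_trans one_pos hx
      exact mul_nonneg (abs_nonneg _) (Real.rpow_nonneg hx0.le _)
    · exact hGint
    · filter_upwards [ae_restrict_mem measurableSet_Ioi] with x hx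
      have hx0 : (0:ℝ) < x := lt_trans one_pos hx
      have hxr : 0 ≤ x ^ (-σ-1) := Real.rpow_nonneg hx0.le _
      rw [hG]
      have habs : |fn n x| ≤ ∑ k ∈ Finset.Icc 1 n,
          |(ArithmeticFunction.moebius k : ℝ)| * nu (x / k) := by
        refine (Finset.abs_sum_le_sum_abs _ _).trans ?_
        apply Finset.sum_le_sum
        intro k hk
        rw [abs_mul, abs_of_nonneg (nu_nonneg _)]
      calc |fn n x| * x ^ (-σ-1)
          ≤ (∑ k ∈ Finset.Icc 1 n, |(ArithmeticFunction.moebius k : ℝ)| * nu (x / k)) * x ^ (-σ-1) :=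
            mul_le_mul_of_nonneg_right habs hxr
        _ = ∑ k ∈ Finset.Icc 1 n, |(ArithmeticFunction.moebius k : ℝ)| * (nu (x / k) * x ^ (-σ-1)) := by
            rw [Finset.sum_mul]; exact Finset.sum_congr rfl fun k _ => by ring
  have step2 : ∫ x in Set.Ioi (1:ℝ), G x
      = ∑ k ∈ Finset.Icc 1 n, |(ArithmeticFunction.moebius k : ℝ)|
          * ∫ x in Set.Ioi (1:ℝ), nu (x / k) * x ^ (-σ-1) := by
    rw [hG, MeasureTheory.integral_finset_sum _ (fun k hk => (hIk1 k hk).const_mul _)]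
    exact Finset.sum_congr rfl fun k _ => MeasureTheory.integral_const_mul _ _
  have step3 : ∀ k ∈ Finset.Icc 1 n,
      ∫ x in Set.Ioi (1:ℝ), nu (x / k) * x ^ (-σ-1)
        ≤ (k:ℝ) ^ (-σ) * (etaR σ / σ) := by
    intro k hk
    have hkpos : (0:ℝ) < k := lt_of_lt_of_le one_pos (hk1 k hk)
    rw [← I_eq hσ hkpos]
    apply setIntegral_mono_set (hIk k hk)
    · filter_upwards [ae_restrict_mem measurableSet_Ioi] with x hx
      exact mul_nonneg (nu_nonneg _) (Real.rpow_nonneg (le_of_lt hx) _)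
    · exact HasSubset.Subset.eventuallyLE (Set.Ioi_subset_Ioi zero_le_one)
  calc ∫ x in Set.Ioi (1:ℝ), |fn n x| * x ^ (-σ-1)
      ≤ ∫ x in Set.Ioi (1:ℝ), G x := step1
    _ = ∑ k ∈ Finset.Icc 1 n, |(ArithmeticFunction.moebius k : ℝ)|
          * ∫ x in Set.Ioi (1:ℝ), nu (x / k) * x ^ (-σ-1) := step2
    _ ≤ ∑ k ∈ Finset.Icc 1 n, |(ArithmeticFunction.moebius k : ℝ)|
          * ((k:ℝ) ^ (-σ) * (etaR σ / σ)) := by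
        apply Finset.sum_le_sum
        intro k hk
        exact mul_le_mul_of_nonneg_left (step3 k hk) (abs_nonneg _)
    _ = (etaR σ / σ) * ∑ k ∈ Finset.Icc 1 n, |(ArithmeticFunction.moebius k : ℝ)| / (k : ℝ) ^ σ := by
        rw [Finset.mul_sum]
        refine Finset.sum_congr rfl fun k hk => ?_
        have hkpos : (0:ℝ) < k := lt_of_lt_of_le one_pos (hk1 k hk)
        rw [Real.rpow_neg hkpos.le, div_eq_mul_inv]
        ring
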